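/- For p, q > 1 and r, s ∈ (0,1), sinh_{p,q}(√(rs)) ≤ √(sinh_{p,q}(r) · sinh_{p,q}(s)). -/

import Mathlib

open Real Set intervalIntegral

namespace SinhPQ

variable {p q : ℝ}

/-- The integrand. -/
noncomputable def f (p q : ℝ) (t : ℝ) : ℝ := (1 + t ^ q) ^ (-1/p)

lemma base_pos (hq : 0 < q) {t : ℝ} (ht : 0 ≤ t) : 0 < 1 + t ^ q := by
  have := Real.rpow_nonneg ht q
  linarith

lemma f_pos (hq : 0 < q) {t : ℝ} (ht : 0 ≤ t) : 0 < f p q t :=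
  Real.rpow_pos_of_pos (base_pos hq ht) _

lemma f_contOn (hq : 0 < q) : ContinuousOn (f p q) (Ici 0) := by
  have h1 : ContinuousOn (fun t : ℝ => 1 + t ^ q) (Ici 0) :=
    (continuous_const.add (Real.continuous_rpow_const hq.le)).continuousOn
  exact h1.rpow_const fun x hx => Or.inl (ne_of_gt (base_pos hq hx))

lemma uIcc_sub {a b : ℝ} (ha : 0 ≤ a) (hb : 0 ≤ b) : uIcc a b ⊆ Ici 0 :=
  fun _ hx => le_trans (le_min ha hb) hx.1

lemma f_intOn (hq : 0 < q) {a b : ℝ} (ha : 0 ≤ a) (hb : 0 ≤ b) :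
    IntervalIntegrable (f p q) MeasureTheory.volume a b :=
  ((f_contOn hq).mono (uIcc_sub ha hb)).intervalIntegrable

lemma f_mul_intOn (hq : 0 < q) {μ a b : ℝ} (hμ : 0 ≤ μ) (ha : 0 ≤ a) (hb : 0 ≤ b) :
    IntervalIntegrable (fun t => f p q (μ * t)) MeasureTheory.volume a b := by
  apply ContinuousOn.intervalIntegrable
  apply (f_contOn hq).comp (continuous_const.mul continuous_id).continuousOn
  intro x hx
  exact mul_nonneg hμ (uIcc_sub ha hb hx)

/-- Pointwise key inequality. -/
lemma key_pointwise (hp : 1 < p) (hq : 0 < q) {μ t s : ℝ} (hμ : 1 ≤ μ)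
    (ht : 0 ≤ t) (hts : t ≤ s) :
    f p q (μ * s) * f p q t ≤ f p q (μ * t) * f p q s := by
  have hs : 0 ≤ s := ht.trans hts
  have hμ0 : 0 ≤ μ := le_trans zero_le_one hμ
  have hμt : 0 ≤ μ * t := mul_nonneg hμ0 ht
  have hμs : 0 ≤ μ * s := mul_nonneg hμ0 hs
  have hA : 0 < 1 + (μ * t) ^ q := base_pos hq hμt
  have hB : 0 < 1 + s ^ q := base_pos hq hs
  have hC : 0 < 1 + (μ * s) ^ q := base_pos hq hμs
  have hD : 0 < 1 + t ^ q := base_pos hq ht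
  have hbase : (1 + (μ * t) ^ q) * (1 + s ^ q) ≤ (1 + (μ * s) ^ q) * (1 + t ^ q) := by
    rw [Real.mul_rpow hμ0 ht, Real.mul_rpow hμ0 hs]
    have h1 : 1 ≤ μ ^ q := Real.one_le_rpow hμ hq.le
    have h2 : t ^ q ≤ s ^ q := Real.rpow_le_rpow ht hts hq.le
    have h3 : 0 ≤ t ^ q := Real.rpow_nonneg ht q
    nlinarith
  have e_nonpos : -1/p ≤ 0 := by
    have hp0 : 0 < p := by linarith
    rw [neg_div]
    exact neg_nonpos.mpr (by positivity)
  calc f p q (μ * s) * f p q t = ((1 + (μ * s) ^ q) * (1 + t ^ q)) ^ (-1/p) := by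
        rw [f, f, ← Real.mul_rpow hC.le hD.le]
    _ ≤ ((1 + (μ * t) ^ q) * (1 + s ^ q)) ^ (-1/p) :=
        Real.rpow_le_rpow_of_nonpos (by positivity) hbase e_nonpos
    _ = f p q (μ * t) * f p q s := by rw [f, f, ← Real.mul_rpow hA.le hB.le]

/-- Scaling identity. -/
lemma scaling (hμ : (0:ℝ) < μ) (x : ℝ) :
    (∫ t in (0:ℝ)..(μ * x), f p q t) = μ * ∫ t in (0:ℝ)..x, f p q (μ * t) := by
  have := intervalIntegral.smul_integral_comp_mul_left (f p q) (a := 0) (b := x) μ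
  rw [mul_zero] at this
  rw [← this, smul_eq_mul]

/-- Ratio monotonicity, integral form. -/
lemma ratio_mono (hp : 1 < p) (hq : 0 < q) {μ x y : ℝ} (hμ : 1 ≤ μ)
    (hx : 0 ≤ x) (hxy : x ≤ y) :
    (∫ t in (0:ℝ)..(μ * y), f p q t) * (∫ t in (0:ℝ)..x, f p q t) ≤
      (∫ t in (0:ℝ)..(μ * x), f p q t) * (∫ t in (0:ℝ)..y, f p q t) := by
  have hμ0 : (0:ℝ) < μ := lt_of_lt_of_le zero_lt_one hμ
  have hy : 0 ≤ y := hx.trans hxy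
  set I := ∫ t in (0:ℝ)..x, f p q (μ * t) with hI
  set J := ∫ t in x..y, f p q (μ * t) with hJ
  set K := ∫ t in (0:ℝ)..x, f p q t with hK
  set L := ∫ t in x..y, f p q t with hL
  have hIJ : (∫ t in (0:ℝ)..y, f p q (μ * t)) = I + J :=
    (intervalIntegral.integral_add_adjacent_intervals
      (f_mul_intOn hq hμ0.le le_rfl hx) (f_mul_intOn hq hμ0.le hx hy)).symm
  have hKL : (∫ t in (0:ℝ)..y, f p q t) = K + L :=
    (intervalIntegral.integral_add_adjacent_intervals
      (f_intOn hq le_rfl hx) (f_intOn hq hx hy)).symm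
  -- Claim 1 : pointwise-in-t comparison of s-integrals
  have claim1 : ∀ t ∈ Icc (0:ℝ) x, f p q t * J ≤ f p q (μ * t) * L := by
    intro t htmem
    have ht0 : 0 ≤ t := htmem.1
    have htx : t ≤ x := htmem.2
    have e1 : f p q t * J = ∫ s in x..y, f p q t * f p q (μ * s) := by
      rw [hJ, ← intervalIntegral.integral_const_mul]
    have e2 : f p q (μ * t) * L = ∫ s in x..y, f p q (μ * t) * f p q s := by
      rw [hL, ← intervalIntegral.integral_const_mul]
    rw [e1, e2]
    apply intervalIntegral.integral_mono_on hxy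
      ((f_mul_intOn hq hμ0.le hx hy).const_mul _)
      ((f_intOn hq hx hy).const_mul _)
    intro s hsmem
    have hts : t ≤ s := htx.trans hsmem.1
    have := key_pointwise hp hq hμ ht0 hts
    linarith [this]
  -- integrate claim 1 over t ∈ [0, x]
  have claim2 : K * J ≤ I * L := by
    have e1 : K * J = ∫ t in (0:ℝ)..x, f p q t * J := by
      rw [hK, ← intervalIntegral.integral_mul_const]
    have e2 : I * L = ∫ t in (0:ℝ)..x, f p q (μ * t) * L := by
      rw [hI, ← intervalIntegral.integral_mul_const]
    rw [e1, e2]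
    exact intervalIntegral.integral_mono_on hx
      ((f_intOn hq le_rfl hx).mul_const _)
      ((f_mul_intOn hq hμ0.le le_rfl hx).mul_const _) claim1
  rw [scaling hμ0 x, scaling hμ0 y, hIJ, hKL]
  nlinarith [claim2, hμ0]

/-- GA-midpoint inequality for the primitive F. -/
lemma GA (hp : 1 < p) (hq : 0 < q) {b c : ℝ} (hb : 0 < b) (hbc : b ≤ c) :
    (∫ t in (0:ℝ)..b, f p q t) * (∫ t in (0:ℝ)..c, f p q t) ≤
      (∫ t in (0:ℝ)..(Real.sqrt (b * c)), f p q t) *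
        (∫ t in (0:ℝ)..(Real.sqrt (b * c)), f p q t) := by
  set m := Real.sqrt (b * c) with hm
  have hc : 0 < c := lt_of_lt_of_le hb hbc
  have hbm : b ≤ m := by
    have : b = Real.sqrt (b * b) := by rw [Real.sqrt_mul_self hb.le]
    rw [this, hm]
    exact Real.sqrt_le_sqrt (by nlinarith)
  have hm0 : 0 < m := lt_of_lt_of_le hb hbm
  have hμ : 1 ≤ m / b := (one_le_div hb).mpr hbm
  have h1 : (m / b) * b = m := div_mul_cancel₀ m (ne_of_gt hb)
  have h2 : (m / b) * m = c := by
    rw [div_mul_eq_mul_div, hm, Real.mul_self_sqrt (by positivity)]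
    field_simp
  have := ratio_mono hp hq hμ hb.le hbm
  rw [h1, h2] at this
  linarith

/-- The comparison function. -/
noncomputable def g (q : ℝ) (t : ℝ) : ℝ := (1 + t ^ q)⁻¹

lemma g_contOn (hq : 0 < q) : ContinuousOn (g q) (Ici 0) := by
  have h1 : ContinuousOn (fun t : ℝ => 1 + t ^ q) (Ici 0) :=
    (continuous_const.add (Real.continuous_rpow_const hq.le)).continuousOn
  exact h1.inv₀ fun x hx => ne_of_gt (base_pos hq hx)

lemma g_nonneg (hq : 0 < q) {t : ℝ} (ht : 0 ≤ t) : 0 ≤ g q t :=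
  inv_nonneg.mpr (base_pos hq ht).le

lemma g_intOn (hq : 0 < q) {a b : ℝ} (ha : 0 ≤ a) (hb : 0 ≤ b) :
    IntervalIntegrable (g q) MeasureTheory.volume a b :=
  ((g_contOn hq).mono (uIcc_sub ha hb)).intervalIntegrable

lemma g_le_f (hp : 1 < p) (hq : 0 < q) {t : ℝ} (ht : 0 ≤ t) : g q t ≤ f p q t := by
  have hb := base_pos hq ht
  have h1 : (1:ℝ) ≤ 1 + t ^ q := by
    have := Real.rpow_nonneg ht q; linarith
  have he : (-1:ℝ) ≤ -1/p := by
    have hp0 : 0 < p := by linarith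
    have h2 : 1/p ≤ 1 := by rw [div_le_one hp0]; linarith
    have e : -1/p = -(1/p) := by ring
    rw [e]; linarith
  calc g q t = (1 + t ^ q) ^ (-1:ℝ) := by rw [g, Real.rpow_neg_one]
    _ ≤ (1 + t ^ q) ^ (-1/p) := Real.rpow_le_rpow_of_exponent_le h1 he
    _ = f p q t := rfl

/-- transformed integrand under t ↦ 1/t -/
lemma phi_contOn (hq : 0 < q) {N : ℝ} (hN : 1 ≤ N) :
    ContinuousOn (fun u : ℝ => (u ^ 2)⁻¹ * g q u⁻¹) (Icc (1/N) 1) := by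
  have hN0 : 0 < N := by linarith
  have hu0 : ∀ u ∈ Icc (1/N) 1, u ≠ 0 := by
    intro u hu
    have : 0 < u := lt_of_lt_of_le (by positivity) hu.1
    exact ne_of_gt this
  have c1 : ContinuousOn (fun u : ℝ => (u ^ 2)⁻¹) (Icc (1/N) 1) :=
    (continuous_pow 2).continuousOn.inv₀ fun u hu => pow_ne_zero 2 (hu0 u hu)
  have c2 : ContinuousOn (fun u : ℝ => g q u⁻¹) (Icc (1/N) 1) := by
    apply (g_contOn hq).comp (continuousOn_id.inv₀ hu0)
    intro u hu
    have h : 0 < u := lt_of_lt_of_le (by positivity) hu.1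
    simp only [id_eq, mem_Ici]
    exact (inv_pos.mpr h).le
  exact c1.mul c2

lemma inv_sub (hq : 0 < q) {N : ℝ} (hN : 1 ≤ N) :
    (∫ t in (1:ℝ)..N, g q t) = ∫ u in (1/N : ℝ)..1, (u ^ 2)⁻¹ * g q u⁻¹ := by
  have hN0 : 0 < N := by linarith
  have h1N : (1/N : ℝ) ≤ 1 := by
    rw [div_le_one hN0]; linarith
  have huIcc : uIcc (1/N : ℝ) 1 = Icc (1/N) 1 := uIcc_of_le h1N
  have hpos : ∀ u ∈ uIcc (1/N : ℝ) 1, 0 < u := by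
    intro u hu
    rw [huIcc] at hu
    exact lt_of_lt_of_le (by positivity) hu.1
  have hder : ∀ u ∈ uIcc (1/N : ℝ) 1, HasDerivAt (fun y : ℝ => y⁻¹) (-(u ^ 2)⁻¹) u :=
    fun u hu => hasDerivAt_inv (ne_of_gt (hpos u hu))
  have hcont' : ContinuousOn (fun u : ℝ => -(u ^ 2)⁻¹) (uIcc (1/N : ℝ) 1) := by
    rw [huIcc]
    exact ((continuous_pow 2).continuousOn.inv₀ fun u hu =>
      pow_ne_zero 2 (ne_of_gt (lt_of_lt_of_le (by positivity) hu.1))).neg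
  have himg : ((fun y : ℝ => y⁻¹) '' uIcc (1/N : ℝ) 1) ⊆ Ici 0 := by
    rintro x ⟨u, hu, rfl⟩
    exact le_of_lt (inv_pos.mpr (hpos u hu))
  have hgsub : ContinuousOn (g q) ((fun y : ℝ => y⁻¹) '' uIcc (1/N : ℝ) 1) :=
    (g_contOn hq).mono himg
  have key := intervalIntegral.integral_comp_smul_deriv' hder hcont' hgsub
  simp only [smul_eq_mul, Function.comp] at key
  have e1 : ((1/N : ℝ))⁻¹ = N := by
    rw [one_div, inv_inv]
  have e2 : ((1:ℝ))⁻¹ = (1:ℝ) := inv_one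
  rw [e1, e2] at key
  -- key : ∫ u in 1/N..1, -(u^2)⁻¹ * g q u⁻¹ = ∫ x in N..1, g q x
  have key2 : (∫ u in (1/N : ℝ)..1, -((u ^ 2)⁻¹ * g q u⁻¹)) = ∫ x in N..(1:ℝ), g q x := by
    rw [← key]; congr 1; ext u; ring
  rw [intervalIntegral.integral_neg] at key2
  rw [intervalIntegral.integral_symm]
  linarith [key2]

lemma growth (hp : 1 < p) (hq : 0 < q) {N : ℝ} (hN : 1 ≤ N) :
    1 - 1/N ≤ ∫ t in (0:ℝ)..N, f p q t := by
  have hN0 : 0 < N := by linarith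
  have h1N0 : (0:ℝ) ≤ 1/N := by positivity
  have h1N : (1/N : ℝ) ≤ 1 := by rw [div_le_one hN0]; linarith
  -- f ≥ g on [0,N]
  have step1 : (∫ t in (0:ℝ)..N, g q t) ≤ ∫ t in (0:ℝ)..N, f p q t := by
    apply intervalIntegral.integral_mono_on hN0.le (g_intOn hq le_rfl hN0.le)
      (f_intOn hq le_rfl hN0.le)
    intro t ht
    exact g_le_f hp hq ht.1
  -- split
  have split1 : (∫ t in (0:ℝ)..N, g q t) =
      (∫ t in (0:ℝ)..(1/N), g q t) + (∫ t in (1/N : ℝ)..1, g q t) +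
        ∫ t in (1:ℝ)..N, g q t := by
    rw [intervalIntegral.integral_add_adjacent_intervals
        (g_intOn hq le_rfl h1N0) (g_intOn hq h1N0 zero_le_one),
      intervalIntegral.integral_add_adjacent_intervals
        (g_intOn hq le_rfl zero_le_one) (g_intOn hq zero_le_one hN0.le)]
  have piece0 : (0:ℝ) ≤ ∫ t in (0:ℝ)..(1/N), g q t := by
    apply intervalIntegral.integral_nonneg h1N0
    intro u hu; exact g_nonneg hq hu.1
  -- pointwise lower bound on [1/N, 1]
  have hpt : ∀ u ∈ Icc (1/N : ℝ) 1, (1:ℝ) ≤ g q u + (u ^ 2)⁻¹ * g q u⁻¹ := by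
    intro u hu
    have hu0 : 0 < u := lt_of_lt_of_le (by positivity) hu.1
    have hu1 : u ≤ 1 := hu.2
    have hX : 0 < u ^ q := Real.rpow_pos_of_pos hu0 q
    have h1X : (0:ℝ) < 1 + u ^ q := by linarith
    have hXi : g q u⁻¹ = (u ^ q) / (1 + u ^ q) := by
      rw [g, Real.inv_rpow hu0.le]
      field_simp
      ring
    have hu2 : 0 < u ^ 2 := by positivity
    have hu21 : u ^ 2 ≤ 1 := by nlinarith
    have hv0 : 0 < (u ^ 2)⁻¹ := inv_pos.mpr hu2
    have h1 : u ^ 2 * (u ^ 2)⁻¹ = 1 := mul_inv_cancel₀ hu2.ne'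
    have hW0 : 0 < (1 + u ^ q)⁻¹ := inv_pos.mpr h1X
    have h2 : (1 + u ^ q) * (1 + u ^ q)⁻¹ = 1 := mul_inv_cancel₀ h1X.ne'
    have hV1 : (1:ℝ) ≤ (u ^ 2)⁻¹ := by nlinarith [h1, hv0, hu21]
    rw [hXi, g, div_eq_mul_inv]
    nlinarith [mul_nonneg (mul_nonneg (sub_nonneg.mpr hV1) hX.le) hW0.le, h2]
  -- integral over [1/N,1] of the sum
  have hintφ : IntervalIntegrable (fun u : ℝ => (u ^ 2)⁻¹ * g q u⁻¹)
      MeasureTheory.volume (1/N) 1 := by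
    apply ContinuousOn.intervalIntegrable
    rw [uIcc_of_le h1N]
    exact phi_contOn hq hN
  have hsum : (1 - 1/N : ℝ) ≤
      (∫ t in (1/N : ℝ)..1, g q t) + ∫ u in (1/N : ℝ)..1, (u ^ 2)⁻¹ * g q u⁻¹ := by
    rw [← intervalIntegral.integral_add (g_intOn hq h1N0 zero_le_one) hintφ]
    have hconst : (1 - 1/N : ℝ) = ∫ _ in (1/N : ℝ)..1, (1:ℝ) := by
      rw [intervalIntegral.integral_const, smul_eq_mul, mul_one]
    rw [hconst]
    apply intervalIntegral.integral_mono_on h1N intervalIntegrable_const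
      ((g_intOn hq h1N0 zero_le_one).add hintφ)
    exact hpt
  rw [← inv_sub hq hN] at hsum
  linarith [step1, piece0, split1]

lemma surj (hp : 1 < p) (hq : 0 < q) {v : ℝ} (h0 : 0 ≤ v) (h1 : v < 1) :
    ∃ x, 0 ≤ x ∧ (∫ t in (0:ℝ)..x, f p q t) = v := by
  set N : ℝ := 2 / (1 - v) with hNdef
  have h1v : 0 < 1 - v := by linarith
  have hN1 : 1 ≤ N := by
    rw [hNdef, le_div_iff₀ h1v]; linarith
  have hN0 : (0:ℝ) ≤ N := by linarith
  have hgrow := growth hp hq hN1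
  have hvN : v ≤ 1 - 1/N := by
    rw [hNdef, one_div_div]
    linarith
  have hvFN : v ≤ ∫ t in (0:ℝ)..N, f p q t := le_trans hvN hgrow
  have hcont : ContinuousOn (fun x => ∫ t in (0:ℝ)..x, f p q t) (Icc 0 N) := by
    have := intervalIntegral.continuousOn_primitive_interval' (f := f p q)
      (f_intOn hq le_rfl hN0) (left_mem_uIcc (a := (0:ℝ)) (b := N))
    rwa [uIcc_of_le hN0] at this
  have hmem : v ∈ Icc ((fun x => ∫ t in (0:ℝ)..x, f p q t) 0)
      ((fun x => ∫ t in (0:ℝ)..x, f p q t) N) := by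
    refine mem_Icc.mpr ⟨?_, hvFN⟩
    simpa using h0
  obtain ⟨x, hx, hFx⟩ := intermediate_value_Icc hN0 hcont hmem
  exact ⟨x, hx.1, hFx⟩

end SinhPQ

theorem sinh_pq_sqrt_ineq (p q : ℝ) (hp : 1 < p) (hq : 1 < q) (S : ℝ → ℝ)
    (hS : ∀ x ∈ Set.Ici (0:ℝ),
      S (∫ t in (0:ℝ)..x, (1 + t ^ q) ^ (-1/p)) = x) :
    ∀ r ∈ Set.Ioo (0:ℝ) 1, ∀ s ∈ Set.Ioo (0:ℝ) 1,
      S (Real.sqrt (r * s)) ≤ Real.sqrt (S r * S s) := by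
  intro r hr s hs
  obtain ⟨hr0, hr1⟩ := hr
  obtain ⟨hs0, hs1⟩ := hs
  have hq0 : 0 < q := by linarith
  have hraw : ∀ x : ℝ,
      (∫ t in (0:ℝ)..x, (1 + t ^ q) ^ (-1/p)) = ∫ t in (0:ℝ)..x, SinhPQ.f p q t :=
    fun _ => rfl
  obtain ⟨b, hb0, hFb⟩ := SinhPQ.surj hp hq0 hr0.le hr1
  obtain ⟨c, hc0, hFc⟩ := SinhPQ.surj hp hq0 hs0.le hs1
  have hSr : S r = b := by rw [← hFb, ← hraw]; exact hS b hb0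
  have hSs : S s = c := by rw [← hFc, ← hraw]; exact hS c hc0
  have hbpos : 0 < b := by
    rcases hb0.lt_or_eq with h | h
    · exact h
    · exfalso
      rw [← h, intervalIntegral.integral_same] at hFb
      linarith
  have hcpos : 0 < c := by
    rcases hc0.lt_or_eq with h | h
    · exact h
    · exfalso
      rw [← h, intervalIntegral.integral_same] at hFc
      linarith
  set m : ℝ := Real.sqrt (b * c) with hm
  have hm0 : (0:ℝ) ≤ m := Real.sqrt_nonneg _
  have hGA : r * s ≤
      (∫ t in (0:ℝ)..m, SinhPQ.f p q t) * (∫ t in (0:ℝ)..m, SinhPQ.f p q t) := by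
    rcases le_total b c with h | h
    · have := SinhPQ.GA hp hq0 hbpos h
      rw [hFb, hFc] at this
      exact this
    · have := SinhPQ.GA hp hq0 hcpos h
      rw [hFb, hFc, mul_comm c b] at this
      linarith
  have hFm0 : (0:ℝ) ≤ ∫ t in (0:ℝ)..m, SinhPQ.f p q t :=
    intervalIntegral.integral_nonneg hm0 fun u hu => (SinhPQ.f_pos hq0 hu.1).le
  have hsq : Real.sqrt (r * s) ≤ ∫ t in (0:ℝ)..m, SinhPQ.f p q t := by
    calc Real.sqrt (r * s)
        ≤ Real.sqrt ((∫ t in (0:ℝ)..m, SinhPQ.f p q t) *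
            (∫ t in (0:ℝ)..m, SinhPQ.f p q t)) := Real.sqrt_le_sqrt hGA
      _ = ∫ t in (0:ℝ)..m, SinhPQ.f p q t := Real.sqrt_mul_self hFm0
  have hcont : ContinuousOn (fun x => ∫ t in (0:ℝ)..x, SinhPQ.f p q t) (Icc 0 m) := by
    have := intervalIntegral.continuousOn_primitive_interval' (f := SinhPQ.f p q)
      (SinhPQ.f_intOn hq0 le_rfl hm0) (left_mem_uIcc (a := (0:ℝ)) (b := m))
    rwa [uIcc_of_le hm0] at this
  have hmem : Real.sqrt (r * s) ∈ Icc ((fun x => ∫ t in (0:ℝ)..x, SinhPQ.f p q t) 0)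
      ((fun x => ∫ t in (0:ℝ)..x, SinhPQ.f p q t) m) := by
    refine mem_Icc.mpr ⟨?_, hsq⟩
    simp
  obtain ⟨a, ha, hFa⟩ := intermediate_value_Icc hm0 hcont hmem
  have hFa' : (∫ t in (0:ℝ)..a, SinhPQ.f p q t) = Real.sqrt (r * s) := hFa
  have hSa : S (Real.sqrt (r * s)) = a := by
    rw [← hFa', ← hraw]
    exact hS a ha.1
  rw [hSa, hSr, hSs]
  exact ha.2
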